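/- Lemma (boundedness for a nonlinear integral inequality with a weakly singular kernel, Lemma `Ll` of the paper). Let α > −1, C > 0, τ₊ > 0, and let Φ : ℝ → ℝ be continuous. Let F : [0,τ₊) → (0,∞) be continuous and satisfy, for all τ ∈ [0,τ₊), F(τ) ≤ C·F(0) + ∫₀^τ Φ(F(σ)) (1 + (τ−σ)^α) dσ. Set M := sup { |Φ(s)| : 0 ≤ s ≤ C·F(0)+1 }. If M = 0, then F(τ) ≤ C·F(0)+1 for all τ ∈ [0,τ₊). If M > 0, set τ* := min( 1/(2M), ((α+1)/(2M))^{1/(α+1)} ); then F(τ) ≤ C·F(0)+1 for all τ ∈ [0,τ₊) with τ < τ*. In particular the bound τ* depends only on C, F(0), α and Φ. -/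

import Mathlib

open Real Set intervalIntegral

/-- **Lemma (boundedness for a nonlinear integral inequality with a weakly singular kernel,
Lemma `Ll` of the paper).**
Let `α > −1`, `C > 0`, `τ₊ > 0`, and `Φ : ℝ → ℝ` continuous.  Let `F : [0,τ₊) → (0,∞)` be
continuous and satisfy `F τ ≤ C·F 0 + ∫₀^τ Φ(F σ)(1 + (τ−σ)^α) dσ` for all `τ ∈ [0,τ₊)`.
Set `M := sup {|Φ s| : 0 ≤ s ≤ C·F 0 + 1}`.  If `M = 0` then `F ≤ C·F 0 + 1` on `[0,τ₊)`;
if `M > 0` then `F ≤ C·F 0 + 1` on `[0,τ₊) ∩ [0,τ*)` where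
`τ* = min (1/(2M)) (((α+1)/(2M))^(1/(α+1)))`. -/
theorem integral_inequality_bounded
    (α C τplus : ℝ) (hα : -1 < α) (hC : 0 < C) (hτplus : 0 < τplus)
    (Φ : ℝ → ℝ) (hΦ : Continuous Φ)
    (F : ℝ → ℝ) (hFc : ContinuousOn F (Set.Ico 0 τplus))
    (hFpos : ∀ τ ∈ Set.Ico 0 τplus, 0 < F τ)
    (hineq : ∀ τ ∈ Set.Ico 0 τplus,
      F τ ≤ C * F 0 + ∫ σ in (0:ℝ)..τ, Φ (F σ) * (1 + (τ - σ) ^ α))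
    (M : ℝ)
    (hM : M = sSup ((fun s => |Φ s|) '' Set.Icc 0 (C * F 0 + 1))) :
    (M = 0 → ∀ τ ∈ Set.Ico 0 τplus, F τ ≤ C * F 0 + 1) ∧
    (0 < M → ∀ τ ∈ Set.Ico 0 τplus,
        τ < min (1 / (2 * M)) (((α + 1) / (2 * M)) ^ (1 / (α + 1))) →
        F τ ≤ C * F 0 + 1) := by
  have hα1 : 0 < α + 1 := by linarith
  set B := C * F 0 + 1 with hBdef
  have h0mem : (0:ℝ) ∈ Set.Ico 0 τplus := ⟨le_rfl, hτplus⟩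
  have hF0pos : 0 < F 0 := hFpos 0 h0mem
  have hF0 : F 0 ≤ C * F 0 := by simpa using hineq 0 h0mem
  have hF0B : F 0 < B := lt_of_le_of_lt hF0 (by rw [hBdef]; linarith)
  have hBpos : 0 < B := lt_trans hF0pos hF0B
  -- properties of M
  have hMb : ∀ s ∈ Set.Icc 0 B, |Φ s| ≤ M := by
    intro s hs
    rw [hM]
    exact le_csSup (isCompact_Icc.image hΦ.abs).bddAbove ⟨s, hs, rfl⟩
  have hMnn : 0 ≤ M := le_trans (abs_nonneg _) (hMb 0 ⟨le_rfl, hBpos.le⟩)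
  -- key integral estimate
  have key : ∀ τ ∈ Set.Ico 0 τplus, (∀ σ ∈ Set.Icc 0 τ, F σ ≤ B) →
      F τ ≤ C * F 0 + M * (τ + τ ^ (α + 1) / (α + 1)) := by
    intro τ hτ hall
    have hτ0 : 0 ≤ τ := hτ.1
    have hIcc : Set.Icc 0 τ ⊆ Set.Ico 0 τplus := fun x hx => ⟨hx.1, lt_of_le_of_lt hx.2 hτ.2⟩
    have hker : IntervalIntegrable (fun σ => (τ - σ) ^ α) MeasureTheory.volume 0 τ := by
      have h1 : IntervalIntegrable (fun x : ℝ => x ^ α) MeasureTheory.volume 0 τ :=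
        intervalIntegrable_rpow' hα
      simpa using (h1.comp_sub_left τ).symm
    have hg : IntervalIntegrable (fun σ => M * (1 + (τ - σ) ^ α)) MeasureTheory.volume 0 τ :=
      (intervalIntegrable_const.add hker).const_mul M
    have hΦF : ContinuousOn (fun σ => Φ (F σ)) (Set.Icc 0 τ) :=
      hΦ.comp_continuousOn (hFc.mono hIcc)
    have huIoc : Set.uIoc (0:ℝ) τ = Set.Ioc 0 τ := Set.uIoc_of_le hτ0
    have hmeas : MeasureTheory.AEStronglyMeasurable (fun σ => Φ (F σ) * (1 + (τ - σ) ^ α))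
        (MeasureTheory.volume.restrict (Set.uIoc (0:ℝ) τ)) := by
      rw [huIoc]
      exact ((hΦF.mono Set.Ioc_subset_Icc_self).aestronglyMeasurable measurableSet_Ioc).mul
        (MeasureTheory.aestronglyMeasurable_const.add hker.aestronglyMeasurable)
    have hptbd : ∀ σ ∈ Set.Icc 0 τ,
        |Φ (F σ) * (1 + (τ - σ) ^ α)| ≤ M * (1 + (τ - σ) ^ α) := by
      intro σ hσ
      have hk0 : 0 ≤ (τ - σ) ^ α := Real.rpow_nonneg (by linarith [hσ.2]) _
      have hFσ : F σ ∈ Set.Icc 0 B := ⟨(hFpos σ (hIcc hσ)).le, hall σ hσ⟩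
      have h1 : |Φ (F σ)| ≤ M := hMb _ hFσ
      rw [abs_mul, abs_of_nonneg (by linarith : (0:ℝ) ≤ 1 + (τ - σ) ^ α)]
      exact mul_le_mul_of_nonneg_right h1 (by linarith)
    have hf : IntervalIntegrable (fun σ => Φ (F σ) * (1 + (τ - σ) ^ α))
        MeasureTheory.volume 0 τ := by
      refine hg.mono_fun' hmeas ?_
      rw [huIoc]
      refine (MeasureTheory.ae_restrict_iff' measurableSet_Ioc).mpr
        (MeasureTheory.ae_of_all _ ?_)
      intro σ hσ
      simpa [Real.norm_eq_abs, abs_mul] using hptbd σ (Set.Ioc_subset_Icc_self hσ)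
    have hmono : (∫ σ in (0:ℝ)..τ, Φ (F σ) * (1 + (τ - σ) ^ α))
        ≤ ∫ σ in (0:ℝ)..τ, M * (1 + (τ - σ) ^ α) := by
      refine intervalIntegral.integral_mono_on hτ0 hf hg ?_
      intro σ hσ
      exact le_trans (le_abs_self _) (hptbd σ hσ)
    have hval : (∫ σ in (0:ℝ)..τ, M * (1 + (τ - σ) ^ α))
        = M * (τ + τ ^ (α + 1) / (α + 1)) := by
      rw [intervalIntegral.integral_const_mul]
      congr 1
      rw [intervalIntegral.integral_add intervalIntegrable_const hker]
      have h2 : (∫ σ in (0:ℝ)..τ, (τ - σ) ^ α) = τ ^ (α + 1) / (α + 1) := by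
        rw [intervalIntegral.integral_comp_sub_left (fun s => s ^ α) τ]
        simp only [sub_zero, sub_self]
        rw [integral_rpow (Or.inl hα)]
        rw [Real.zero_rpow (by positivity : α + 1 ≠ 0)]
        ring
      rw [h2]
      simp
    calc F τ ≤ C * F 0 + ∫ σ in (0:ℝ)..τ, Φ (F σ) * (1 + (τ - σ) ^ α) := hineq τ hτ
      _ ≤ C * F 0 + ∫ σ in (0:ℝ)..τ, M * (1 + (τ - σ) ^ α) := by linarith
      _ = C * F 0 + M * (τ + τ ^ (α + 1) / (α + 1)) := by rw [hval]
  -- bootstrap / continuity argument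
  have boot : ∀ T : ℝ,
      (∀ t ∈ Set.Ico 0 τplus, t < T → (∀ σ ∈ Set.Icc 0 t, F σ ≤ B) → F t < B) →
      ∀ τ ∈ Set.Ico 0 τplus, τ < T → F τ ≤ B := by
    intro T hT t ht htT
    set A : Set ℝ := {x | x ∈ Set.Icc 0 t ∧ ∀ σ ∈ Set.Icc 0 x, F σ ≤ B} with hAdef
    have h0A : (0:ℝ) ∈ A := by
      refine ⟨⟨le_rfl, ht.1⟩, fun σ hσ => ?_⟩
      have hσ0 : σ = 0 := le_antisymm hσ.2 hσ.1
      rw [hσ0]; exact hF0B.le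
    have hAne : A.Nonempty := ⟨0, h0A⟩
    have hAbdd : BddAbove A := ⟨t, fun x hx => hx.1.2⟩
    set u := sSup A with hu
    have hu0 : 0 ≤ u := le_csSup hAbdd h0A
    have hut : u ≤ t := csSup_le hAne fun x hx => hx.1.2
    have huτ : u ∈ Set.Ico 0 τplus := ⟨hu0, lt_of_le_of_lt hut ht.2⟩
    have hub : ∀ σ ∈ Set.Ico 0 u, F σ ≤ B := by
      intro σ hσ
      obtain ⟨a, haA, hsa⟩ := exists_lt_of_lt_csSup hAne hσ.2
      exact haA.2 σ ⟨hσ.1, hsa.le⟩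
    have huA : u ∈ A := by
      refine ⟨⟨hu0, hut⟩, fun σ hσ => ?_⟩
      rcases lt_or_eq_of_le hσ.2 with h | h
      · exact hub σ ⟨hσ.1, h⟩
      · rcases eq_or_lt_of_le hu0 with h0 | h0
        · rw [h, ← h0]; exact hF0B.le
        · rw [h]
          have hc : ContinuousWithinAt F (Set.Ico 0 u) u :=
            (hFc u huτ).mono fun x hx => ⟨hx.1, lt_trans hx.2 huτ.2⟩
          have hcl : u ∈ closure (Set.Ico 0 u) := by
            rw [closure_Ico h0.ne]
            exact ⟨hu0, le_rfl⟩
          haveI hne : (nhdsWithin u (Set.Ico 0 u)).NeBot :=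
            mem_closure_iff_nhdsWithin_neBot.mp hcl
          exact le_of_tendsto hc (Filter.eventually_of_mem self_mem_nhdsWithin hub)
    have hFu : F u < B := hT u huτ (lt_of_le_of_lt hut htT) huA.2
    have hueq : u = t := by
      by_contra hne
      have hult : u < t := lt_of_le_of_ne hut hne
      have hc : ContinuousWithinAt F (Set.Icc 0 t) u :=
        (hFc u huτ).mono fun x hx => ⟨hx.1, lt_of_le_of_lt hx.2 ht.2⟩
      have hev : ∀ᶠ x in nhdsWithin u (Set.Icc 0 t), F x < B :=
        hc.eventually (Filter.Tendsto.eventually_lt_const hFu Filter.tendsto_id)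
      rw [eventually_nhdsWithin_iff, Metric.eventually_nhds_iff] at hev
      obtain ⟨ε, hε, hev⟩ := hev
      set a := min t (u + ε / 2) with ha
      have hua : u < a := lt_min hult (by linarith)
      have haA : a ∈ A := by
        refine ⟨⟨le_trans hu0 hua.le, min_le_left _ _⟩, fun σ hσ => ?_⟩
        rcases le_or_gt σ u with hσu | hσu
        · exact huA.2 σ ⟨hσ.1, hσu⟩
        · have hσt : σ ∈ Set.Icc 0 t := ⟨hσ.1, le_trans hσ.2 (min_le_left _ _)⟩
          have hd : dist σ u < ε := by
            rw [Real.dist_eq, abs_of_nonneg (by linarith : (0:ℝ) ≤ σ - u)]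
            have hσa : σ ≤ u + ε / 2 := le_trans hσ.2 (min_le_right _ _)
            linarith
          exact (hev hd hσt).le
      exact absurd (le_csSup hAbdd haA) (not_le.mpr hua)
    exact huA.2 t ⟨ht.1, hueq.ge⟩
  constructor
  · intro hM0 τ hτ
    refine boot τplus (fun t ht hlt hall => ?_) τ hτ hτ.2
    have h1 := key t ht hall
    rw [hM0, zero_mul, add_zero] at h1
    exact lt_of_le_of_lt h1 (by rw [hBdef]; linarith)
  · intro hMpos τ hτ hτ'
    refine boot _ (fun t ht hlt hall => ?_) τ hτ hτ'
    obtain ⟨hlt1, hlt2⟩ := lt_min_iff.mp hlt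
    have h1 := key t ht hall
    have h2 : t * (2 * M) < 1 := (lt_div_iff₀ (by positivity)).mp hlt1
    have hx : 0 ≤ (α + 1) / (2 * M) := by positivity
    have h3 : t ^ (α + 1) < (α + 1) / (2 * M) := by
      have h4 := Real.rpow_lt_rpow ht.1 hlt2 hα1
      rwa [one_div, Real.rpow_inv_rpow hx (ne_of_gt hα1)] at h4
    have h5 : M * (t ^ (α + 1)) / (α + 1) < 1 / 2 := by
      rw [div_lt_iff₀ hα1]
      have h6 := mul_lt_mul_of_pos_left h3 hMpos
      have h7 : M * ((α + 1) / (2 * M)) = (α + 1) / 2 := by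
        field_simp
      nlinarith
    have h6 : M * t < 1 / 2 := by nlinarith
    have h8 : M * (t + t ^ (α + 1) / (α + 1)) = M * t + M * (t ^ (α + 1)) / (α + 1) := by
      ring
    rw [hBdef]
    rw [h8] at h1
    linarith
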